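/- In a chinampa there is a unique pyramidion with maximum time (the spike): if (i,t) and (j,t) with i < j are both tops of maximal pyramids of secondary vertices and t is the maximum activation time, then i = j. -/

import Mathlib

/-- Adjacency in an activation diagram: edges go from `(i,t)` to `(i,t+1)` and
from `(i,t)` to `(i-1,t-1)` (taken symmetrically). -/
def chinAdj (a b : ℤ × ℕ) : Prop :=
  (b.1 = a.1 ∧ b.2 = a.2 + 1) ∨ (a.1 = b.1 ∧ a.2 = b.2 + 1) ∨
    (b.1 = a.1 - 1 ∧ a.2 = b.2 + 1) ∨ (a.1 = b.1 - 1 ∧ b.2 = a.2 + 1)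

/-- A pyramidion of the set `S` of activated vertices: an activated vertex
`(i,t)` such that neither `(i,t+1)` nor `(i+1,t+1)` is activated. -/
def IsPyramidion (S : Set (ℤ × ℕ)) (i : ℤ) (t : ℕ) : Prop :=
  (i, t) ∈ S ∧ (i, t + 1) ∉ S ∧ (i + 1, t + 1) ∉ S

lemma chinAdj_time {x y : ℤ × ℕ} (h : chinAdj x y) :
    y.2 = x.2 + 1 ∨ x.2 = y.2 + 1 := by
  rcases h with ⟨_, h⟩ | ⟨_, h⟩ | ⟨_, h⟩ | ⟨_, h⟩
  · exact Or.inl h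
  · exact Or.inr h
  · exact Or.inr h
  · exact Or.inl h

lemma head?_append_cons {α : Type*} (l₁ : List α) (x : α) (l₂ l₃ : List α) :
    (l₁ ++ x :: l₂).head? = (l₁ ++ x :: l₃).head? := by
  cases l₁ <;> simp

/-- In a walk whose times change by ±1 along edges, which starts with a
descending step and eventually rises strictly above its second vertex, there
is a local minimum in time. -/
lemma exists_valley :
    ∀ (l : List (ℤ × ℕ)) (c p b : ℤ × ℕ),
      List.Chain (fun x y : ℤ × ℕ => y.2 = x.2 + 1 ∨ x.2 = y.2 + 1) c l →
      p.2 = c.2 + 1 →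
      (c :: l).getLast? = some b → c.2 < b.2 →
      ∃ (l₁ l₂ : List (ℤ × ℕ)) (p' c' q' : ℤ × ℕ),
        p :: c :: l = l₁ ++ p' :: c' :: q' :: l₂ ∧ p'.2 = c'.2 + 1 ∧ q'.2 = c'.2 + 1
  | [], c, p, b, _, _, hlast, hlt => by
      simp only [List.getLast?_singleton, Option.some.injEq] at hlast
      subst hlast
      omega
  | q :: l, c, p, b, hch, hp, hlast, hlt => by
      rw [List.Chain, List.isChain_cons_cons] at hch
      rcases hch.1 with hup | hdn
      · exact ⟨[], l, p, c, q, rfl, hp, hup⟩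
      · rw [List.getLast?_cons_cons] at hlast
        obtain ⟨l₁, l₂, p', c', q', heq, h1, h2⟩ :=
          exists_valley l q c b hch.2 hdn hlast (by omega)
        exact ⟨p :: l₁, l₂, p', c', q', by rw [List.cons_append, ← heq], h1, h2⟩

lemma walk_top_eq (S : Set (ℤ × ℕ)) (t : ℕ)
    (hclosed : ∀ r : ℤ, ∀ u : ℕ, (r, u) ∈ S → (r - 1, u) ∈ S → (r, u + 1) ∈ S)
    (hmax : ∀ p ∈ S, p.2 ≤ t) :
    ∀ (n : ℕ) (L : List (ℤ × ℕ)) (a b : ℤ × ℕ),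
      (L.map (fun p => t - p.2)).sum ≤ n →
      L.Chain' (fun x y => chinAdj x y ∧ x ∈ S ∧ y ∈ S) →
      L.head? = some a → L.getLast? = some b →
      a.2 = t → b.2 = t → a = b := by
  intro n
  induction n using Nat.strong_induction_on with
  | _ n ih =>
  intro L a b hsum hch hhead hlast hat hbt
  cases L with
  | nil => simp at hhead
  | cons a' l =>
  simp only [List.head?_cons, Option.some.injEq] at hhead
  subst hhead
  cases l with
  | nil =>
    simp only [List.getLast?_singleton, Option.some.injEq] at hlast
    exact hlast
  | cons c l' =>
  rw [List.Chain', List.isChain_cons_cons] at hch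
  obtain ⟨hRac, hch'⟩ := hch
  have hcS : c ∈ S := hRac.2.2
  rcases chinAdj_time hRac.1 with hup | hdn
  · exact absurd (hmax c hcS) (by omega)
  · rw [List.getLast?_cons_cons] at hlast
    have hchT : List.Chain (fun x y : ℤ × ℕ => y.2 = x.2 + 1 ∨ x.2 = y.2 + 1) c l' :=
      List.Chain.imp (fun x y h => chinAdj_time h.1) hch'
    obtain ⟨l₁, l₂, p, c', q, heq, hp, hq⟩ :=
      exists_valley l' c a' b hchT hdn hlast (by omega)
    -- rewrite everything along the decomposition
    have hsum' : (((l₁ ++ p :: c' :: q :: l₂).map (fun p => t - p.2)).sum) ≤ n := by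
      rw [← heq]
      simpa using hsum
    have hch2 : List.Chain' (fun x y => chinAdj x y ∧ x ∈ S ∧ y ∈ S)
        (l₁ ++ p :: c' :: q :: l₂) := by
      rw [← heq]
      exact List.isChain_cons_cons.mpr ⟨hRac, hch'⟩
    have hhead2 : (l₁ ++ p :: c' :: q :: l₂).head? = some a' := by
      rw [← heq]; rfl
    have hlast2 : (l₁ ++ p :: c' :: q :: l₂).getLast? = some b := by
      rw [← heq, List.getLast?_cons_cons]
      exact hlast
    rw [List.Chain', List.isChain_append_cons_cons] at hch2
    obtain ⟨hch1, hRpc, hch3⟩ := hch2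
    rw [List.isChain_cons_cons] at hch3
    obtain ⟨hRcq, hch4⟩ := hch3
    obtain ⟨p1, p2⟩ := p
    obtain ⟨c1, c2⟩ := c'
    obtain ⟨q1, q2⟩ := q
    simp only at hp hq
    have hpS : (p1, p2) ∈ S := hRpc.2.1
    have hcS' : (c1, c2) ∈ S := hRpc.2.2
    have hqS : (q1, q2) ∈ S := hRcq.2.2
    have hct : c2 + 1 ≤ t := by have := hmax _ hpS; simp at this; omega
    have hpcol : p1 = c1 ∨ p1 = c1 + 1 := by
      rcases hRpc.1 with ⟨h1, h2⟩ | ⟨h1, h2⟩ | ⟨h1, h2⟩ | ⟨h1, h2⟩ <;>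
        simp only at h1 h2 <;> omega
    have hqcol : q1 = c1 ∨ q1 = c1 + 1 := by
      rcases hRcq.1 with ⟨h1, h2⟩ | ⟨h1, h2⟩ | ⟨h1, h2⟩ | ⟨h1, h2⟩ <;>
        simp only at h1 h2 <;> omega
    by_cases hpq : p1 = q1
    · -- the valley disappears: shortcut the walk
      have hpq' : (p1, p2) = (q1, q2) := by
        rw [hpq]; congr 1; omega
      refine ih (((l₁ ++ (p1, p2) :: l₂).map (fun p => t - p.2)).sum) ?_
        (l₁ ++ (p1, p2) :: l₂) a' b le_rfl ?_ ?_ ?_ hat hbt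
      · -- strict decrease of the measure
        calc ((l₁ ++ (p1, p2) :: l₂).map (fun p => t - p.2)).sum
            < ((l₁ ++ (p1, p2) :: (c1, c2) :: (q1, q2) :: l₂).map (fun p => t - p.2)).sum := by
              simp only [List.map_append, List.sum_append, List.map_cons, List.sum_cons]
              omega
          _ ≤ n := hsum'
      · exact List.isChain_split.mpr ⟨hch1, by rw [hpq']; exact hch4⟩
      · rw [head?_append_cons l₁ (p1, p2) l₂ ((c1, c2) :: (q1, q2) :: l₂)]
        exact hhead2
      · rw [List.getLast?_append_cons, hpq']
        rw [List.getLast?_append_cons, List.getLast?_cons_cons, List.getLast?_cons_cons] at hlast2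
        exact hlast2
    · -- a genuine valley: lift it using the closure rule
      have hX : (c1 + 1, c2 + 1 + 1) ∈ S := by
        have h1 : (c1 + 1, c2 + 1) ∈ S := by
          rcases hpcol with h | h <;> rcases hqcol with h' | h' <;> try omega
          · rw [show (c1 + 1 : ℤ) = q1 by omega, show c2 + 1 = q2 by omega]; exact hqS
          · rw [show (c1 + 1 : ℤ) = p1 by omega, show c2 + 1 = p2 by omega]; exact hpS
        have h2 : (c1 + 1 - 1, c2 + 1) ∈ S := by
          rw [show (c1 + 1 - 1 : ℤ) = c1 by ring]
          rcases hpcol with h | h <;> rcases hqcol with h' | h' <;> try omega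
          · rw [show (c1 : ℤ) = p1 by omega, show c2 + 1 = p2 by omega]; exact hpS
          · rw [show (c1 : ℤ) = q1 by omega, show c2 + 1 = q2 by omega]; exact hqS
        exact hclosed (c1 + 1) (c2 + 1) h1 h2
      have hXt : c2 + 1 + 1 ≤ t := by have := hmax _ hX; simpa using this
      refine ih (((l₁ ++ (p1, p2) :: (c1 + 1, c2 + 1 + 1) :: (q1, q2) :: l₂).map
          (fun p => t - p.2)).sum) ?_
        (l₁ ++ (p1, p2) :: (c1 + 1, c2 + 1 + 1) :: (q1, q2) :: l₂) a' b le_rfl ?_ ?_ ?_ hat hbt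
      · calc ((l₁ ++ (p1, p2) :: (c1 + 1, c2 + 1 + 1) :: (q1, q2) :: l₂).map
              (fun p => t - p.2)).sum
            < ((l₁ ++ (p1, p2) :: (c1, c2) :: (q1, q2) :: l₂).map (fun p => t - p.2)).sum := by
              simp only [List.map_append, List.sum_append, List.map_cons, List.sum_cons]
              omega
          _ ≤ n := hsum'
      · rw [List.Chain', List.isChain_append_cons_cons]
        refine ⟨hch1, ⟨?_, hpS, hX⟩, List.isChain_cons_cons.mpr ⟨⟨?_, hX, hqS⟩, hch4⟩⟩
        · simp only [chinAdj]
          omega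
        · simp only [chinAdj]
          omega
      · rw [head?_append_cons l₁ (p1, p2) _ ((c1, c2) :: (q1, q2) :: l₂)]
        exact hhead2
      · rw [List.getLast?_append_cons, List.getLast?_cons_cons, List.getLast?_cons_cons]
        rw [List.getLast?_append_cons, List.getLast?_cons_cons, List.getLast?_cons_cons] at hlast2
        exact hlast2

/-- Uniqueness of the spike: in a finite, connected set of activated vertices
closed under the activation rule (`(r,t)` and `(r-1,t)` activated imply
`(r,t+1)` activated), there is at most one pyramidion whose time is maximal
among all activated vertices. -/
theorem spike_unique (S : Set (ℤ × ℕ)) (hfin : S.Finite)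
    (hclosed : ∀ r : ℤ, ∀ t : ℕ, (r, t) ∈ S → (r - 1, t) ∈ S → (r, t + 1) ∈ S)
    (hconn : ∀ a ∈ S, ∀ b ∈ S,
      Relation.ReflTransGen (fun x y => chinAdj x y ∧ x ∈ S ∧ y ∈ S) a b)
    (i j : ℤ) (t : ℕ)
    (hi : IsPyramidion S i t) (hj : IsPyramidion S j t)
    (hmax : ∀ p ∈ S, p.2 ≤ t) :
    i = j := by
  obtain ⟨l, hchain, hlast⟩ :=
    List.exists_isChain_cons_of_relationReflTransGen (hconn (i, t) hi.1 (j, t) hj.1)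
  have h := walk_top_eq S t hclosed hmax
    ((((i, t) :: l).map (fun p => t - p.2)).sum) ((i, t) :: l) (i, t) (j, t)
    le_rfl hchain rfl ?_ rfl rfl
  · exact congrArg Prod.fst h
  · rw [List.getLast?_eq_getLast_of_ne_nil (List.cons_ne_nil _ _), hlast]
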